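/- Let TA be a threshold automaton over an environment Env that is multiplicative for TA. If τ is a steady schedule applicable to a configuration σ with τ(σ) = σ', then for every positive integer μ, the μ-fold concatenation μ·τ = τ·τ·…·τ (μ times) is applicable to the configuration μ·σ and (μ·τ)(μ·σ) = μ·σ'. -/

import Mathlib

set_option linter.unusedSectionVars false
set_option linter.unusedVariables false

/-!
Threshold automata (Konnov, Veith, Widder), following
"Complexity of Verification and Synthesis of Threshold Automata".
-/

/-- A threshold guard `x ⋈ a₀ + a₁·p₁ + … + a_{|Π|}·p_{|Π|}` over shared variables `V` and
parameters `P`.  `isRise = true` means a *rise* guard `x ≥ …`, and `isRise = false` means a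
*fall* guard `x < …`. -/
structure TGuard (V P : Type) where
  var : V
  isRise : Bool
  a0 : ℚ
  coef : P → ℚ

/-- A configuration `σ = (κ, g, p)`: numbers of processes in each location, values of the
shared variables, and values of the parameters. -/
structure Config (L V P : Type) where
  κ : L → ℕ
  g : V → ℕ
  p : P → ℕ

/-- A rule of a threshold automaton: source and target locations, a guard that is a
(finite) conjunction of threshold guards, and an update `V → {0,1}`. -/
structure TRule (L V P : Type) where
  src : L
  dst : L
  guard : List (TGuard V P)
  upd : V → ℕ
  upd_le_one : ∀ v, upd v ≤ 1

/-- A threshold automaton `(L, I, Γ, R)` together with its environment `(Π, RC, N)`.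
`L`, `V`, `P` are the types of locations, shared variables and parameters, and `R` is the
index type of rules. -/
structure TA (L V P R : Type) where
  initial : Set L
  initial_nonempty : initial.Nonempty
  rc : Set (P → ℕ)
  N : (P → ℕ) → ℕ
  rule : R → TRule L V P

variable {L V P R : Type}

/-- Satisfaction of a threshold guard by values `g` of the shared variables and `p` of the
parameters. -/
def TGuard.holds [Fintype P] (φ : TGuard V P) (g : V → ℕ) (p : P → ℕ) : Prop :=
  if φ.isRise then φ.a0 + ∑ i : P, φ.coef i * (p i : ℚ) ≤ (g φ.var : ℚ)
  else (g φ.var : ℚ) < φ.a0 + ∑ i : P, φ.coef i * (p i : ℚ)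

/-- A configuration enables a rule. -/
def TRule.enabledAt [Fintype P] (r : TRule L V P) (σ : Config L V P) : Prop :=
  0 < σ.κ r.src ∧ ∀ φ ∈ r.guard, φ.holds σ.g σ.p

/-- The result of firing a rule at a configuration. -/
def TRule.fire [DecidableEq L] (r : TRule L V P) (σ : Config L V P) : Config L V P where
  κ := fun ℓ => σ.κ ℓ + (if ℓ = r.dst then 1 else 0) - (if ℓ = r.src then 1 else 0)
  g := fun v => σ.g v + r.upd v
  p := σ.p

namespace TA

variable [Fintype P] [DecidableEq L]

/-- `σ` is a configuration of `ta`: the parameters satisfy the resilience condition and the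
total number of processes is `N(p)`. -/
def validConfig [Fintype L] (ta : TA L V P R) (σ : Config L V P) : Prop :=
  σ.p ∈ ta.rc ∧ ∑ ℓ : L, σ.κ ℓ = ta.N σ.p

/-- Initial configurations. -/
def isInitial [Fintype L] (ta : TA L V P R) (σ : Config L V P) : Prop :=
  ta.validConfig σ ∧ (∀ ℓ, ℓ ∉ ta.initial → σ.κ ℓ = 0) ∧ ∀ v, σ.g v = 0

/-- A schedule (finite sequence of rules) is applicable to a configuration. -/
def applicable (ta : TA L V P R) : Config L V P → List R → Prop
  | _, [] => True
  | σ, r :: τ => (ta.rule r).enabledAt σ ∧ ta.applicable ((ta.rule r).fire σ) τ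

/-- The configuration `τ(σ)` resulting from applying a schedule. -/
def apply (ta : TA L V P R) : Config L V P → List R → Config L V P
  | σ, [] => σ
  | σ, r :: τ => ta.apply ((ta.rule r).fire σ) τ

/-- The configurations visited by the path from `σ` along `τ` (including both endpoints). -/
def visited (ta : TA L V P R) : Config L V P → List R → List (Config L V P)
  | σ, [] => [σ]
  | σ, r :: τ => σ :: ta.visited ((ta.rule r).fire σ) τ

/-- Reachability `σ →* σ'`. -/
def reaches (ta : TA L V P R) (σ σ' : Config L V P) : Prop :=
  ∃ τ : List R, ta.applicable σ τ ∧ ta.apply σ τ = σ'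

/-- The set of all threshold guards occurring in rules of the automaton. -/
def guards (ta : TA L V P R) : Set (TGuard V P) :=
  {φ | ∃ r : R, φ ∈ (ta.rule r).guard}

/-- The context `ω(σ)`: rise guards of `ta` that are true in `σ` together with fall guards
of `ta` that are false in `σ`. -/
def context (ta : TA L V P R) (σ : Config L V P) : Set (TGuard V P) :=
  {φ | φ ∈ ta.guards ∧ if φ.isRise then φ.holds σ.g σ.p else ¬ φ.holds σ.g σ.p}

/-- A schedule applicable at `σ` is steady if all configurations visited by the
corresponding path have the same context. -/
def steady (ta : TA L V P R) (σ : Config L V P) (τ : List R) : Prop :=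
  ∀ σ' ∈ ta.visited σ τ, ta.context σ' = ta.context σ

end TA

/-- Satisfaction of a threshold guard by rational values `y` (for the shared variable) and
`q` (for the parameters). -/
def TGuard.holdsQ [Fintype P] (φ : TGuard V P) (y : ℚ) (q : P → ℚ) : Prop :=
  if φ.isRise then φ.a0 + ∑ i : P, φ.coef i * q i ≤ y
  else y < φ.a0 + ∑ i : P, φ.coef i * q i

/-- Scalar multiple `μ·σ` of a configuration. -/
def Config.smul (μ : ℕ) (σ : Config L V P) : Config L V P :=
  ⟨fun ℓ => μ * σ.κ ℓ, fun v => μ * σ.g v, fun i => μ * σ.p i⟩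

/-- The environment is multiplicative for the automaton: for every `μ > 0`, the resilience
condition and `N` scale by `μ`, and rational solutions of every guard of the automaton are
preserved under scaling by `μ`. -/
def TA.Multiplicative [Fintype P] (ta : TA L V P R) : Prop :=
  ∀ μ : ℕ, 0 < μ →
    (∀ p ∈ ta.rc, (fun i => μ * p i) ∈ ta.rc ∧ ta.N (fun i => μ * p i) = μ * ta.N p) ∧
    (∀ φ ∈ ta.guards, ∀ (y : ℚ) (q : P → ℚ),
      φ.holdsQ y q → φ.holdsQ (μ * y) (fun i => μ * q i))


section Aux

variable [Fintype P] [DecidableEq L]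

lemma Config.ext' {σ₁ σ₂ : Config L V P} (h1 : σ₁.κ = σ₂.κ) (h2 : σ₁.g = σ₂.g)
    (h3 : σ₁.p = σ₂.p) : σ₁ = σ₂ := by
  cases σ₁; cases σ₂; cases h1; cases h2; cases h3; rfl

lemma TA.apply_p (ta : TA L V P R) : ∀ (τ : List R) (σ : Config L V P),
    (ta.apply σ τ).p = σ.p
  | [], σ => rfl
  | r :: τ, σ => by rw [TA.apply, TA.apply_p ta τ]; rfl

lemma TA.apply_g_le (ta : TA L V P R) : ∀ (τ : List R) (σ : Config L V P) (v : V),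
    σ.g v ≤ (ta.apply σ τ).g v
  | [], σ, v => le_refl _
  | r :: τ, σ, v => by
      rw [TA.apply]
      calc σ.g v ≤ ((ta.rule r).fire σ).g v := Nat.le_add_right _ _
        _ ≤ _ := TA.apply_g_le ta τ ((ta.rule r).fire σ) v

lemma TA.apply_mem_visited (ta : TA L V P R) : ∀ (τ : List R) (σ : Config L V P),
    ta.apply σ τ ∈ ta.visited σ τ
  | [], σ => by simp [TA.apply, TA.visited]
  | r :: τ, σ => by
      rw [TA.apply, TA.visited]
      exact List.mem_cons_of_mem _ (TA.apply_mem_visited ta τ _)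

lemma TA.applicable_append (ta : TA L V P R) : ∀ (τ₁ τ₂ : List R) (σ : Config L V P),
    ta.applicable σ τ₁ → ta.applicable (ta.apply σ τ₁) τ₂ → ta.applicable σ (τ₁ ++ τ₂)
  | [], τ₂, σ => fun _ h => h
  | r :: τ₁, τ₂, σ => fun h1 h2 => ⟨h1.1, TA.applicable_append ta τ₁ τ₂ _ h1.2 h2⟩

lemma TA.apply_append (ta : TA L V P R) : ∀ (τ₁ τ₂ : List R) (σ : Config L V P),
    ta.apply σ (τ₁ ++ τ₂) = ta.apply (ta.apply σ τ₁) τ₂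
  | [], τ₂, σ => rfl
  | r :: τ₁, τ₂, σ => TA.apply_append ta τ₁ τ₂ _

/-- `holds` only depends on the value of `g` at `φ.var`, monotonically for rise guards. -/
lemma TGuard.holds_rise_mono {φ : TGuard V P} (hr : φ.isRise = true)
    {g g' : V → ℕ} {p : P → ℕ} (h : φ.holds g p) (hle : g φ.var ≤ g' φ.var) :
    φ.holds g' p := by
  unfold TGuard.holds at *
  rw [hr] at h ⊢
  simp only [if_true] at *
  exact h.trans (by exact_mod_cast hle)

lemma TGuard.holds_fall_mono {φ : TGuard V P} (hr : φ.isRise = false)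
    {g g' : V → ℕ} {p : P → ℕ} (h : φ.holds g p) (hle : g' φ.var ≤ g φ.var) :
    φ.holds g' p := by
  unfold TGuard.holds at *
  rw [hr] at h ⊢
  simp only [if_neg Bool.false_ne_true] at *
  exact lt_of_le_of_lt (by exact_mod_cast hle) h

lemma TGuard.holds_scale (μ : ℕ) {φ : TGuard V P}
    (hQ : ∀ (y : ℚ) (q : P → ℚ), φ.holdsQ y q → φ.holdsQ (μ * y) (fun i => μ * q i))
    {g : V → ℕ} {p : P → ℕ} (h : φ.holds g p) :
    φ.holds (fun v => μ * g v) (fun i => μ * p i) := by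
  have h0 : φ.holdsQ (g φ.var : ℚ) (fun i => (p i : ℚ)) := by
    unfold TGuard.holds at h; unfold TGuard.holdsQ; exact h
  have h1 := hQ _ _ h0
  unfold TGuard.holdsQ at h1
  unfold TGuard.holds
  push_cast
  exact h1

/-- The combined configuration `a·σ + b·σ' + x`, with parameters `μ·σ.p`. -/
def comb (μ a b : ℕ) (σ σ' x : Config L V P) : Config L V P :=
  ⟨fun ℓ => a * σ.κ ℓ + b * σ'.κ ℓ + x.κ ℓ,
   fun v => a * σ.g v + b * σ'.g v + x.g v,
   fun i => μ * σ.p i⟩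

lemma fire_comb {μ a b : ℕ} {σ σ' x : Config L V P} (r : TRule L V P)
    (hx : 0 < x.κ r.src) :
    r.fire (comb μ a b σ σ' x) = comb μ a b σ σ' (r.fire x) := by
  refine Config.ext' ?_ ?_ rfl
  · funext ℓ
    show a * σ.κ ℓ + b * σ'.κ ℓ + x.κ ℓ + (if ℓ = r.dst then 1 else 0)
        - (if ℓ = r.src then 1 else 0) =
      a * σ.κ ℓ + b * σ'.κ ℓ + (x.κ ℓ + (if ℓ = r.dst then 1 else 0)
        - (if ℓ = r.src then 1 else 0))
    by_cases h2 : ℓ = r.src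
    · subst h2; split_ifs <;> omega
    · rw [if_neg h2]; split_ifs <;> omega
  · funext v
    show a * σ.g v + b * σ'.g v + x.g v + r.upd v =
      a * σ.g v + b * σ'.g v + (x.g v + r.upd v)
    omega

lemma one_copy (ta : TA L V P R) (μ : ℕ)
    (hQ : ∀ φ ∈ ta.guards, ∀ (y : ℚ) (q : P → ℚ),
      φ.holdsQ y q → φ.holdsQ (μ * y) (fun i => μ * q i))
    (σ σ' : Config L V P) (hp : σ'.p = σ.p) (hgσ' : ∀ v, σ.g v ≤ σ'.g v)
    (a b : ℕ) (hab : a + b + 1 = μ) :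
    ∀ (τ : List R) (x : Config L V P),
      ta.applicable x τ → ta.apply x τ = σ' →
      (∀ v, σ.g v ≤ x.g v) →
      (∀ γ ∈ ta.visited x τ, ta.context γ = ta.context σ) →
      ta.applicable (comb μ a b σ σ' x) τ ∧
      ta.apply (comb μ a b σ σ' x) τ = comb μ a b σ σ' σ'
  | [], x, happ, happl, hxg, hctx => by
      have : x = σ' := happl
      subst this
      exact ⟨trivial, rfl⟩
  | r :: τ, x, happ, happl, hxg, hctx => by
      obtain ⟨⟨hpos, hguards⟩, happ'⟩ := happ
      have hctxx : ta.context x = ta.context σ := hctx x (by rw [TA.visited]; exact List.mem_cons_self)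
      have hσ'mem : σ' ∈ ta.visited x (r :: τ) := happl ▸ ta.apply_mem_visited (r :: τ) x
      have hctxσ' : ta.context σ' = ta.context σ := hctx σ' hσ'mem
      have hxgσ' : ∀ v, x.g v ≤ σ'.g v := by
        intro v
        have h1 : x.g v ≤ ((ta.rule r).fire x).g v := Nat.le_add_right _ _
        have h2 := ta.apply_g_le τ ((ta.rule r).fire x) v
        rw [TA.apply] at happl
        have h3 : (ta.apply ((ta.rule r).fire x) τ).g v = σ'.g v := by rw [happl]
        omega
      have hen : (ta.rule r).enabledAt (comb μ a b σ σ' x) := by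
        constructor
        · show 0 < a * σ.κ _ + b * σ'.κ _ + x.κ _
          omega
        · intro φ hφ
          have hmem : φ ∈ ta.guards := ⟨r, hφ⟩
          have hx : φ.holds x.g x.p := hguards φ hφ
          cases hrise : φ.isRise with
          | true =>
            have hφσ : φ.holds σ.g σ.p := by
              have hin : φ ∈ ta.context x := by
                simp only [TA.context, Set.mem_setOf_eq, hrise, if_true]
                exact ⟨hmem, hx⟩
              rw [hctxx] at hin
              simp only [TA.context, Set.mem_setOf_eq, hrise, if_true] at hin
              exact hin.2
            have hs := TGuard.holds_scale μ (hQ φ hmem) hφσ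
            refine TGuard.holds_rise_mono hrise hs ?_
            show μ * σ.g φ.var ≤ a * σ.g φ.var + b * σ'.g φ.var + x.g φ.var
            have h1 := hgσ' φ.var
            have h2 := hxg φ.var
            nlinarith
          | false =>
            have hφσ' : φ.holds σ'.g σ'.p := by
              have hnin : φ ∉ ta.context x := by
                simp only [TA.context, Set.mem_setOf_eq, hrise, Bool.false_eq_true,
                  if_false, not_and, not_not]
                intro _; exact hx
              rw [hctxx, ← hctxσ'] at hnin
              simp only [TA.context, Set.mem_setOf_eq, hrise, Bool.false_eq_true,
                if_false, not_and, not_not] at hnin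
              exact hnin hmem
            rw [hp] at hφσ'
            have hs := TGuard.holds_scale μ (hQ φ hmem) hφσ'
            refine TGuard.holds_fall_mono hrise hs ?_
            show a * σ.g φ.var + b * σ'.g φ.var + x.g φ.var ≤ μ * σ'.g φ.var
            have h1 := hgσ' φ.var
            have h2 := hxgσ' φ.var
            nlinarith
      have hfc := fire_comb (x := x) (μ := μ) (a := a) (b := b) (σ := σ) (σ' := σ') (ta.rule r) hpos
      have IH := one_copy ta μ hQ σ σ' hp hgσ' a b hab τ ((ta.rule r).fire x) happ'
        (by rw [TA.apply] at happl; exact happl)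
        (fun v => le_trans (hxg v) (Nat.le_add_right _ _))
        (fun γ hγ => hctx γ (by rw [TA.visited]; exact List.mem_cons_of_mem _ hγ))
      refine ⟨⟨hen, ?_⟩, ?_⟩
      · show ta.applicable ((ta.rule r).fire (comb μ a b σ σ' x)) τ
        rw [hfc]; exact IH.1
      · show ta.apply ((ta.rule r).fire (comb μ a b σ σ' x)) τ = _
        rw [hfc]; exact IH.2

end Aux

/-- In a threshold automaton over a multiplicative environment, if `τ` is a steady schedule
applicable to `σ` with `τ(σ) = σ'`, then for every positive integer `μ` the `μ`-fold
concatenation `μ·τ = τ·τ·…·τ` is applicable to `μ·σ` and `(μ·τ)(μ·σ) = μ·σ'`. -/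


theorem steady_schedule_smul [Fintype P] [DecidableEq L] [Fintype L]
    (ta : TA L V P R) (hmult : ta.Multiplicative)
    (σ σ' : Config L V P) (hσ : ta.validConfig σ)
    (τ : List R) (happ : ta.applicable σ τ) (hsteady : ta.steady σ τ)
    (happl : ta.apply σ τ = σ')
    (μ : ℕ) (hμ : 0 < μ) :
    ta.applicable (Config.smul μ σ) (List.replicate μ τ).flatten ∧
    ta.apply (Config.smul μ σ) (List.replicate μ τ).flatten = Config.smul μ σ' := by
  
  subst happl
  set σ' := ta.apply σ τ with hσ'def
  have hQ := (hmult μ hμ).2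
  have hp : σ'.p = σ.p := ta.apply_p τ σ
  have hgσ' : ∀ v, σ.g v ≤ σ'.g v := ta.apply_g_le τ σ
  have key : ∀ (c b : ℕ), b + c + 1 = μ →
      ta.applicable (comb μ c b σ σ' σ) (List.replicate (c + 1) τ).flatten ∧
      ta.apply (comb μ c b σ σ' σ) (List.replicate (c + 1) τ).flatten =
        comb μ 0 (μ - 1) σ σ' σ' := by
    intro c
    induction c with
    | zero =>
      intro b hb
      have hb' : b = μ - 1 := by omega
      subst hb'
      have h1 := one_copy ta μ hQ σ σ' hp hgσ' 0 (μ - 1) (by omega) τ σ happ rfl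
        (fun v => le_refl _) hsteady
      simpa using h1
    | succ c ih =>
      intro b hb
      have h1 := one_copy ta μ hQ σ σ' hp hgσ' (c + 1) b (by omega) τ σ happ rfl
        (fun v => le_refl _) hsteady
      have hshift : comb μ (c + 1) b σ σ' σ' = comb μ c (b + 1) σ σ' σ := by
        refine Config.ext' ?_ ?_ rfl <;> funext z <;>
          show (c + 1) * _ + b * _ + _ = c * _ + (b + 1) * _ + _ <;> ring
      have ih' := ih (b + 1) (by omega)
      have hflat : (List.replicate (c + 1 + 1) τ).flatten =
          τ ++ (List.replicate (c + 1) τ).flatten := by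
        rw [List.replicate_succ, List.flatten_cons]
      rw [hflat]
      constructor
      · exact ta.applicable_append _ _ _ h1.1 (by rw [h1.2, hshift]; exact ih'.1)
      · rw [ta.apply_append, h1.2, hshift]; exact ih'.2
  have hstart : Config.smul μ σ = comb μ (μ - 1) 0 σ σ' σ := by
    refine Config.ext' ?_ ?_ rfl <;> funext z <;>
      show μ * _ = (μ - 1) * _ + 0 * _ + _ <;>
      · have : μ - 1 + 1 = μ := by omega
        nlinarith [this]
  have hend : comb μ 0 (μ - 1) σ σ' σ' = Config.smul μ σ' := by
    refine Config.ext' ?_ ?_ ?_ <;> funext z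
    · show 0 * _ + (μ - 1) * _ + _ = μ * _
      have : μ - 1 + 1 = μ := by omega
      nlinarith [this]
    · show 0 * _ + (μ - 1) * _ + _ = μ * _
      have : μ - 1 + 1 = μ := by omega
      nlinarith [this]
    · show μ * σ.p z = μ * σ'.p z
      rw [hp]
  have hk := key (μ - 1) 0 (by omega)
  have hrepl : List.replicate μ τ = List.replicate (μ - 1 + 1) τ := by
    rw [Nat.sub_add_cancel hμ]
  rw [hstart, hrepl]
  exact ⟨hk.1, by rw [hk.2, hend]⟩
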